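/- Let k be a difference field and K an inversive σ-field extension of k (σ : K → K is an automorphism). Let R be a k-σ-algebra such that R ⊗_k K is σ-reduced. Then for all k-linearly independent f₁,…,fₙ ∈ R, the elements σ(f₁),…,σ(fₙ) ∈ R are k-linearly independent over k. -/

import Mathlib

open TensorProduct

/-- The diagonal endomorphism `σ(a ⊗ b) = σ(a) ⊗ σ(b)` of `A ⊗_k B` is injective
(i.e. `A ⊗_k B` is σ-reduced): any ring endomorphism satisfying the defining rule
on pure tensors is injective. -/
def SigmaReducedTensor (k A B : Type) [CommRing k] [CommRing A] [CommRing B]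
    [Algebra k A] [Algebra k B] (σA : A →+* A) (σB : B →+* B) : Prop :=
  ∀ τ : (A ⊗[k] B) →+* A ⊗[k] B,
    (∀ (a : A) (b : B), τ (a ⊗ₜ[k] b) = σA a ⊗ₜ[k] σB b) → Function.Injective τ

/-- A `k`-σ-algebra `R` is σ-separable over `k` if `R ⊗_k K` is σ-reduced for
every difference field extension `K` of `k`. -/
def IsSigmaSeparable (k R : Type) [Field k] [CommRing R] [Algebra k R]
    (σk : k →+* k) (σR : R →+* R) : Prop :=
  ∀ (K : Type) [Field K] [Algebra k K], ∀ σK : K →+* K,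
    (∀ x : k, σK (algebraMap k K x) = algebraMap k K (σk x)) →
    SigmaReducedTensor k K R σK σR

/-- Base change preserves linear independence (field case). -/
theorem li_baseChange_aux (k R K : Type) [Field k] [CommRing R] [Algebra k R]
    [Field K] [Algebra k K] {n : ℕ} (f : Fin n → R) (hf : LinearIndependent k f) :
    LinearIndependent K (fun i => (1 : K) ⊗ₜ[k] f i : Fin n → K ⊗[k] R) := by
  let S := Submodule.span k (Set.range f)
  let b : Module.Basis (Fin n) k S := Module.Basis.span hf
  have hinj : Function.Injective (LinearMap.baseChange K S.subtype) := by
    rw [LinearMap.baseChange_eq_ltensor]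
    exact Module.Flat.lTensor_preserves_injective_linearMap S.subtype S.injective_subtype
  have h := ((b.baseChange K).linearIndependent).map'
    (LinearMap.baseChange K S.subtype) (LinearMap.ker_eq_bot.mpr hinj)
  have heq : (LinearMap.baseChange K S.subtype) ∘ (b.baseChange K)
      = fun i => (1 : K) ⊗ₜ[k] f i := by
    funext i
    simp only [Function.comp_apply, Module.Basis.baseChange_apply, LinearMap.baseChange_tmul,
      Submodule.subtype_apply]
    rw [Module.Basis.span_apply]
  rwa [heq] at h

/-- If `K` is an inversive difference field extension of `k` and `R ⊗_k K` is
σ-reduced, then `σ` preserves `k`-linear independence in `R`. -/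
theorem strongly_etale_stmt2
    (k R K : Type) [Field k] [CommRing R] [Algebra k R] [Field K] [Algebra k K]
    (σk : k →+* k) (σR : R →+* R) (σK : K →+* K)
    (hcompR : ∀ x : k, σR (algebraMap k R x) = algebraMap k R (σk x))
    (hcompK : ∀ x : k, σK (algebraMap k K x) = algebraMap k K (σk x))
    (hinv : Function.Bijective σK)
    (hred : SigmaReducedTensor k K R σK σR) :
    ∀ (n : ℕ) (f : Fin n → R), LinearIndependent k f →
      LinearIndependent k (fun i => σR (f i)) := by
  classical
  -- construct the difference ring endomorphism τ of K ⊗ R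
  let F : K →+ R →+ K ⊗[k] R :=
  { toFun := fun a =>
    { toFun := fun b => σK a ⊗ₜ[k] σR b
      map_zero' := by simp
      map_add' := by intro x y; simp [map_add, TensorProduct.tmul_add] }
    map_zero' := by ext b; simp
    map_add' := by intro x y; ext b; simp [map_add, TensorProduct.add_tmul] }
  have hbal : ∀ (c : k) (a : K) (b : R), F (c • a) b = F a (c • b) := by
    intro c a b
    show σK (c • a) ⊗ₜ[k] σR b = σK a ⊗ₜ[k] σR (c • b)
    rw [Algebra.smul_def, map_mul, hcompK, ← Algebra.smul_def, TensorProduct.smul_tmul,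
      Algebra.smul_def, ← hcompR, ← map_mul, ← Algebra.smul_def]
  let τ0 : K ⊗[k] R →+ K ⊗[k] R := TensorProduct.liftAddHom F hbal
  have hτ0 : ∀ (a : K) (b : R), τ0 (a ⊗ₜ[k] b) = σK a ⊗ₜ[k] σR b := fun a b =>
    TensorProduct.liftAddHom_tmul F hbal a b
  have hmul : ∀ x y : K ⊗[k] R, τ0 (x * y) = τ0 x * τ0 y := by
    intro x y
    induction x using TensorProduct.induction_on with
    | zero => simp
    | add x₁ x₂ h₁ h₂ => simp [add_mul, map_add, h₁, h₂]
    | tmul a b =>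
      induction y using TensorProduct.induction_on with
      | zero => simp
      | add y₁ y₂ h₁ h₂ => simp [mul_add, map_add, h₁, h₂]
      | tmul c d =>
        simp [Algebra.TensorProduct.tmul_mul_tmul, hτ0, map_mul]
  let τ : K ⊗[k] R →+* K ⊗[k] R :=
  { toFun := τ0
    map_one' := by
      rw [Algebra.TensorProduct.one_def, hτ0, map_one, map_one,
        ← Algebra.TensorProduct.one_def]
    map_mul' := hmul
    map_zero' := map_zero τ0
    map_add' := map_add τ0 }
  have hτ : ∀ (a : K) (b : R), τ (a ⊗ₜ[k] b) = σK a ⊗ₜ[k] σR b := hτ0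
  have hτinj := hred τ hτ
  -- main argument
  intro n f hf
  have hKli := li_baseChange_aux k R K f hf
  rw [Fintype.linearIndependent_iff] at hKli ⊢
  intro g hg
  -- lift the coefficients along σK
  let d : Fin n → K := fun i => (hinv.2 (algebraMap k K (g i))).choose
  have hd : ∀ i, σK (d i) = algebraMap k K (g i) := fun i =>
    (hinv.2 (algebraMap k K (g i))).choose_spec
  have hx : τ (∑ i, d i ⊗ₜ[k] f i) = 0 := by
    rw [map_sum]
    have : ∀ i, τ (d i ⊗ₜ[k] f i) = (1 : K) ⊗ₜ[k] (g i • σR (f i)) := by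
      intro i
      rw [hτ, hd, Algebra.algebraMap_eq_smul_one, TensorProduct.smul_tmul]
    rw [Finset.sum_congr rfl fun i _ => this i, ← TensorProduct.tmul_sum, hg,
      TensorProduct.tmul_zero]
  have hx0 : (∑ i, d i ⊗ₜ[k] f i) = 0 := by
    apply hτinj
    rw [hx, map_zero]
  have hd0 : ∀ i, d i = 0 := by
    apply hKli
    rw [← hx0]
    apply Finset.sum_congr rfl
    intro i _
    rw [TensorProduct.smul_tmul', smul_eq_mul, mul_one]
  intro i
  have : algebraMap k K (g i) = 0 := by rw [← hd i, hd0 i, map_zero]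
  exact (algebraMap k K).injective (by rw [this, map_zero])
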